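/- arXiv:1711.04177 — 3 statements merged into one kernel-verified Lean document; each statement's English description precedes it below -/
import Mathlib

section
/- Let (G,Γ) be a surjective almost semisimple graph structure of growth λ > 1 which has exactly one non-trivial strongly connected component (non-trivial meaning it contains a directed closed path of positive length). Then (G,Γ) is thick: for every maximal vertex v there exists a finite subset B ⊆ G with G = B·Γ_v·B. -/
open Filter Set

/-! ## Hyperbolic geometry preliminaries -/

/-- The Gromov product `(y,z)ₓ`. -/
noncomputable def gromovProd {X : Type*} [MetricSpace X] (x y z : X) : ℝ :=
  (dist x y + dist x z - dist y z) / 2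

/-- A metric space is geodesic if any two points are joined by a geodesic segment. -/
def IsGeodesicSpace (X : Type*) [MetricSpace X] : Prop :=
  ∀ x y : X, ∃ f : ℝ → X, f 0 = x ∧ f (dist x y) = y ∧
    ∀ s ∈ Set.Icc (0:ℝ) (dist x y), ∀ t ∈ Set.Icc (0:ℝ) (dist x y),
      dist (f s) (f t) = |s - t|

/-- δ-hyperbolicity via the four-point condition on Gromov products. -/
def IsDeltaHyperbolic (X : Type*) [MetricSpace X] (δ : ℝ) : Prop :=
  ∀ x y z w : X, min (gromovProd x y w) (gromovProd x w z) - δ ≤ gromovProd x y z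

section Action

variable {G X : Type*} [Group G] [MetricSpace X] [MulAction G X]

/-- The action of `G` on `X` is by isometries. -/
def IsIsometricAction (G X : Type*) [Group G] [MetricSpace X] [MulAction G X] : Prop :=
  ∀ (g : G) (x y : X), dist (g • x) (g • y) = dist x y

/-- Translation length `τ(g) = lim dist (gⁿ x) x / n` (as a `limsup`, which coincides with
the limit for isometric actions, and is independent of the basepoint). -/
noncomputable def transLen (g : G) (x : X) : ℝ :=
  Filter.limsup (fun n : ℕ => dist ((g ^ n) • x) x / n) Filter.atTop

/-- `g` is loxodromic if its translation length is positive. -/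
def IsLoxodromic (g : G) (x : X) : Prop := 0 < transLen g x

/-- Two independent loxodromic elements. -/
def IndepLox (x : X) (g h : G) : Prop :=
  IsLoxodromic g x ∧ IsLoxodromic h x ∧
    ∃ M : ℝ, ∀ n m : ℤ, n ≠ 0 → m ≠ 0 →
      gromovProd x ((g ^ n) • x) ((h ^ m) • x) ≤ M

/-- A subset of `G` is nonelementary if it contains two independent loxodromics. -/
def NonelemSubset (x : X) (A : Set G) : Prop :=
  ∃ g ∈ A, ∃ h ∈ A, IndepLox x g h

end Action

/-! ## Graph structures -/

/-- A graph structure on a group `G`: a finite directed multigraph with edges labeled by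
elements of `G`, an initial vertex from which every vertex is reachable, and distinct labels
on edges leaving a common vertex. -/
structure GraphStruct (G : Type*) where
  V : Type
  E : Type
  fintV : Fintype V
  fintE : Fintype E
  decV : DecidableEq V
  src : E → V
  tgt : E → V
  label : E → G
  init : V
  label_inj : ∀ e e' : E, src e = src e' → label e = label e' → e = e'
  reach : ∀ v : V, v = init ∨ ∃ es : List E, es ≠ [] ∧
      List.Chain' (fun e e' => tgt e = src e') es ∧
      (∀ e ∈ es.head?, src e = init) ∧ (∀ e ∈ es.getLast?, tgt e = v)

attribute [instance] GraphStruct.fintV GraphStruct.fintE GraphStruct.decV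

/-- Word length at most `c` with respect to the symmetrized alphabet `S ∪ S⁻¹`. -/
def HasWordLenLE {G : Type*} [Group G] (S : Set G) (g : G) (c : ℝ) : Prop :=
  ∃ l : List G, (∀ s ∈ l, s ∈ S ∪ S⁻¹) ∧ (l.length : ℝ) ≤ c ∧ l.prod = g

namespace GraphStruct

variable {G : Type*} [Group G] (Γ : GraphStruct G)

/-- The edges of a list form a directed path (consecutive edges are incident). -/
def IsChain (es : List Γ.E) : Prop :=
  List.Chain' (fun e e' => Γ.tgt e = Γ.src e') es

/-- A directed path starting at the vertex `v`. -/
def IsPathFrom (v : Γ.V) (es : List Γ.E) : Prop :=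
  Γ.IsChain es ∧ ∀ e ∈ es.head?, Γ.src e = v

/-- The path ends at the vertex `v`. -/
def EndsAt (es : List Γ.E) (v : Γ.V) : Prop :=
  ∀ e ∈ es.getLast?, Γ.tgt e = v

/-- Evaluation of a path: the ordered product of its edge labels. -/
def ev (es : List Γ.E) : G := (es.map Γ.label).prod

/-- The set of finite directed paths starting at the initial vertex. -/
def Omega0 : Set (List Γ.E) := {es | Γ.IsPathFrom Γ.init es}

/-- The paths of length `n` starting at the initial vertex. -/
def Sn (n : ℕ) : Set (List Γ.E) := {es | es ∈ Γ.Omega0 ∧ es.length = n}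

/-- The counting measure `Pⁿ(A) = #(Sₙ ∩ A) / #Sₙ`. -/
noncomputable def Pn (n : ℕ) (A : Set (List Γ.E)) : ℝ :=
  ((Γ.Sn n ∩ A).ncard : ℝ) / ((Γ.Sn n).ncard : ℝ)

/-- `w` is accessible from `v` by a directed path. -/
def Accessible (v w : Γ.V) : Prop :=
  v = w ∨ ∃ es : List Γ.E, es ≠ [] ∧ Γ.IsPathFrom v es ∧ Γ.EndsAt es w

/-- Mutual accessibility (same strongly connected component). -/
def MutAcc (v w : Γ.V) : Prop := Γ.Accessible v w ∧ Γ.Accessible w v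

/-- Paths of length `n` from `v` staying in the strongly connected component of `v`. -/
def compPaths (v : Γ.V) (n : ℕ) : Set (List Γ.E) :=
  {es | es.length = n ∧ Γ.IsPathFrom v es ∧
    ∀ e ∈ es, Γ.MutAcc v (Γ.src e) ∧ Γ.MutAcc v (Γ.tgt e)}

/-- The adjacency matrix of the graph, as a complex matrix. -/
noncomputable def adjMatrix : Matrix Γ.V Γ.V ℂ :=
  fun v w => (Nat.card {e : Γ.E // Γ.src e = v ∧ Γ.tgt e = w} : ℂ)

/-- The graph structure is almost semisimple of growth `lam > 1`: `lam` is the maximal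
modulus of eigenvalues of the adjacency matrix, and every eigenvalue of modulus `lam` has
equal algebraic and geometric multiplicities. -/
def AlmostSemisimple (lam : ℝ) : Prop :=
  1 < lam ∧ (∃ μ ∈ spectrum ℂ Γ.adjMatrix, ‖μ‖ = lam) ∧
    (∀ μ ∈ spectrum ℂ Γ.adjMatrix, ‖μ‖ ≤ lam) ∧
    ∀ μ ∈ spectrum ℂ Γ.adjMatrix, ‖μ‖ = lam →
      (Γ.adjMatrix.charpoly).rootMultiplicity μ =
        Module.finrank ℂ (Module.End.eigenspace (Matrix.toLin' Γ.adjMatrix) μ)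

/-- A vertex is maximal if the number of paths of length `n` from `v` staying in the
component of `v` grows like `lam ^ n`. -/
def MaximalVertex (lam : ℝ) (v : Γ.V) : Prop :=
  Filter.limsup (fun n : ℕ => ((Γ.compPaths v n).ncard : ℝ) ^ ((n : ℝ)⁻¹)) Filter.atTop = lam

/-- The loop semigroup of `v`: evaluations of directed loops based at `v`. -/
def loopSemigroup (v : Γ.V) : Set G :=
  {g | ∃ es : List Γ.E, es ≠ [] ∧ Γ.IsPathFrom v es ∧ Γ.EndsAt es v ∧ Γ.ev es = g}

/-- Thickness relative to a subgroup `H`: `H ⊆ B·Γ_v·B` for a finite set `B`,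
for every maximal vertex `v`. -/
def ThickRel (lam : ℝ) (H : Subgroup G) : Prop :=
  ∀ v : Γ.V, Γ.MaximalVertex lam v → ∃ B : Finset G,
    ∀ h ∈ H, ∃ b₁ ∈ B, ∃ l ∈ Γ.loopSemigroup v, ∃ b₂ ∈ B, h = b₁ * l * b₂

/-- Thickness: `G = B·Γ_v·B` for a finite set `B`, for every maximal vertex `v`. -/
def Thick (lam : ℝ) : Prop :=
  ∀ v : Γ.V, Γ.MaximalVertex lam v → ∃ B : Finset G,
    ∀ g : G, ∃ b₁ ∈ B, ∃ l ∈ Γ.loopSemigroup v, ∃ b₂ ∈ B, g = b₁ * l * b₂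

/-- The set of edge labels of the graph. -/
def labelSet : Set G := Set.range Γ.label

/-- A path `γ` `c`-almost contains `w` if it has a consecutive subpath `p` with
`w = a · ev(p) · b` where `|a|, |b| ≤ c`. -/
def AlmostContains (c : ℝ) (w : G) (γ : List Γ.E) : Prop :=
  ∃ pre p suf : List Γ.E, γ = pre ++ p ++ suf ∧
    ∃ a b : G, HasWordLenLE Γ.labelSet a c ∧ HasWordLenLE Γ.labelSet b c ∧
      w = a * Γ.ev p * b

/-- The set of paths from the initial vertex that do not `c`-almost contain `w`. -/
def Ywc (w : G) (c : ℝ) : Set (List Γ.E) :=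
  {γ | γ ∈ Γ.Omega0 ∧ ¬ Γ.AlmostContains c w γ}

/-- Growth quasitightness relative to a subgroup `H`. -/
def GrowthQuasitightRel (H : Subgroup G) : Prop :=
  ∃ c : ℝ, 0 < c ∧ ∀ w ∈ H,
    Filter.Tendsto (fun n => Γ.Pn n (Γ.Ywc w c)) Filter.atTop (nhds 0)

/-- The graph structure is nonelementary for the action on `X`: the loop semigroup of every
maximal vertex contains two independent loxodromics. -/
def NonelemStructure {X : Type*} [MetricSpace X] [MulAction G X]
    (lam : ℝ) (x : X) : Prop :=
  ∀ v : Γ.V, Γ.MaximalVertex lam v → NonelemSubset x (Γ.loopSemigroup v)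

/-- There is a nonempty directed loop based at `v`. -/
def HasLoopAt (v : Γ.V) : Prop :=
  ∃ es : List Γ.E, es ≠ [] ∧ Γ.IsPathFrom v es ∧ Γ.EndsAt es v

end GraphStruct

/-- Word length of `g` with respect to the alphabet `S`. -/
noncomputable def wordLength {G : Type*} [Monoid G] (S : Set G) (g : G) : ℕ :=
  sInf {k | ∃ l : List G, l.length = k ∧ (∀ s ∈ l, s ∈ S) ∧ l.prod = g}

/-- A geodesic combing of `G` with respect to `S`: a graph structure with labels in `S` whose
evaluation map is a bijection from `Ω₀` to `G`, each path evaluating to an element of word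
length equal to the length of the path. -/
def GraphStruct.IsGeodesicCombing {G : Type*} [Group G] (Γ : GraphStruct G) (S : Set G) :
    Prop :=
  Set.range Γ.label ⊆ S ∧ Set.BijOn Γ.ev Γ.Omega0 Set.univ ∧
    ∀ p ∈ Γ.Omega0, wordLength S (Γ.ev p) = p.length



set_option linter.unusedSectionVars false

theorem getElem_idx_congr {α : Type*} (l : List α) {a b : ℕ} (hab : a = b)
    (ha : a < l.length) : l[a] = l[b]'(hab ▸ ha) := by subst hab; rfl

theorem mem_head?_eq {α : Type*} {l : List α} {a : α} (h : a ∈ l.head?) :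
    ∃ h0 : 0 < l.length, a = l[0] := by
  cases l with
  | nil => simp at h
  | cons b t =>
    simp only [List.head?_cons, Option.mem_some_iff] at h
    exact ⟨by simp, h.symm⟩

theorem mem_getLast?_eq {α : Type*} {l : List α} {a : α} (h : a ∈ l.getLast?) :
    ∃ h0 : 0 < l.length, a = l[l.length - 1] := by
  rw [List.getLast?_eq_getElem?] at h
  have hne : l ≠ [] := by rintro rfl; simp at h
  have h0 : 0 < l.length := List.length_pos_iff.mpr hne
  rw [List.getElem?_eq_getElem (by omega)] at h
  simp only [Option.mem_some_iff] at h
  exact ⟨h0, h.symm⟩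

namespace GraphStruct
variable {G : Type*} [Group G] (Γ : GraphStruct G)

theorem ev_append (p q : List Γ.E) : Γ.ev (p ++ q) = Γ.ev p * Γ.ev q := by
  simp [ev]

theorem isPathFrom_append {v w : Γ.V} {p q : List Γ.E}
    (hp : Γ.IsPathFrom v p) (hpe : Γ.EndsAt p w) (hq : Γ.IsPathFrom w q)
    (hnil : p = [] → v = w) : Γ.IsPathFrom v (p ++ q) := by
  constructor
  · show List.IsChain _ (p ++ q)
    rw [List.isChain_append]
    exact ⟨hp.1, hq.1, fun x hx y hy => (hpe x hx).trans (hq.2 y hy).symm⟩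
  · intro e he
    cases p with
    | nil =>
      simp only [List.nil_append] at he
      exact (hq.2 e he).trans (hnil rfl).symm
    | cons a p' =>
      simp only [List.cons_append, List.head?_cons, Option.mem_some_iff] at he
      subst he
      exact hp.2 a rfl

theorem endsAt_append {u : Γ.V} {p q : List Γ.E} (hq : Γ.EndsAt q u)
    (h : q = [] → Γ.EndsAt p u) : Γ.EndsAt (p ++ q) u := by
  intro e he
  cases q with
  | nil =>
    simp only [List.append_nil] at he
    exact h rfl e he
  | cons a q' =>
    rw [List.getLast?_append] at he
    have : (a :: q').getLast? = some ((a :: q').getLast (by simp)) :=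
      List.getLast?_eq_getLast _
    rw [this] at he
    simp only [Option.some_or, Option.mem_some_iff] at he
    subst he
    exact hq _ this

theorem accessible_elim {u w : Γ.V} (h : Γ.Accessible u w) :
    ∃ p, Γ.IsPathFrom u p ∧ Γ.EndsAt p w ∧ (p = [] → u = w) := by
  rcases h with rfl | ⟨p, hne, hp, he⟩
  · exact ⟨[], ⟨List.isChain_nil, by simp⟩, by simp [EndsAt], fun _ => rfl⟩
  · exact ⟨p, hp, he, fun h => absurd h hne⟩

theorem accessible_intro {u w : Γ.V} {p : List Γ.E} (hp : Γ.IsPathFrom u p)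
    (he : Γ.EndsAt p w) (h0 : p = [] → u = w) : Γ.Accessible u w := by
  by_cases hne : p = []
  · exact Or.inl (h0 hne)
  · exact Or.inr ⟨p, hne, hp, he⟩

theorem accessible_trans {u w x : Γ.V} (h1 : Γ.Accessible u w) (h2 : Γ.Accessible w x) :
    Γ.Accessible u x := by
  obtain ⟨p, hp, hpe, hp0⟩ := Γ.accessible_elim h1
  obtain ⟨q, hq, hqe, hq0⟩ := Γ.accessible_elim h2
  refine Γ.accessible_intro (Γ.isPathFrom_append hp hpe hq hp0)
    (Γ.endsAt_append hqe (fun h => (hq0 h) ▸ hpe)) ?_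
  intro h
  rw [List.append_eq_nil_iff] at h
  exact (hp0 h.1).trans (hq0 h.2)

theorem mutAcc_refl (v : Γ.V) : Γ.MutAcc v v := ⟨Or.inl rfl, Or.inl rfl⟩

theorem mutAcc_symm {v w : Γ.V} (h : Γ.MutAcc v w) : Γ.MutAcc w v := ⟨h.2, h.1⟩

theorem mutAcc_trans {u w x : Γ.V} (h1 : Γ.MutAcc u w) (h2 : Γ.MutAcc w x) :
    Γ.MutAcc u x :=
  ⟨Γ.accessible_trans h1.1 h2.1, Γ.accessible_trans h2.2 h1.2⟩

theorem hasLoopAt_of_dup {γ : List Γ.E} (hc : Γ.IsChain γ) {i j : ℕ} (hij : i < j)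
    (hj : j < γ.length)
    (heq : Γ.src (γ[i]'(lt_trans hij hj)) = Γ.src (γ[j]'hj)) :
    Γ.HasLoopAt (Γ.src (γ[i]'(lt_trans hij hj))) := by
  have hi : i < γ.length := lt_trans hij hj
  set s : List Γ.E := (γ.drop i).take (j - i) with hs
  have hslen : s.length = j - i := by
    simp [hs]
    omega
  have hsne : s ≠ [] := by
    intro h
    rw [h] at hslen
    simp at hslen
    omega
  have hinfix : s <:+: γ :=
    (List.take_prefix _ _).isInfix.trans (List.drop_suffix i γ).isInfix
  have hchain : Γ.IsChain s := hc.infix hinfix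
  have hget : ∀ (k : ℕ) (hk : k < s.length), s[k] = γ[i + k]'(by omega) := by
    intro k hk
    exact (List.getElem_take (xs := γ.drop i)).trans (List.getElem_drop (xs := γ))
  have h0 : s[0]'(by omega) = γ[i] := by
    have := hget 0 (by omega)
    simpa using this
  have hcg : ∀ (k : ℕ) (hk : k + 1 < γ.length), Γ.tgt (γ[k]) = Γ.src (γ[k+1]) := by
    intro k hk
    have := List.isChain_iff_getElem.mp hc k (by omega)
    simpa using this
  refine ⟨s, hsne, ⟨hchain, ?_⟩, ?_⟩
  · intro e he
    rw [List.head?_eq_getElem?, List.getElem?_eq_getElem (by omega)] at he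
    simp only [Option.mem_some_iff] at he
    rw [← he, h0]
  · intro e he
    rw [List.getLast?_eq_getElem?, List.getElem?_eq_getElem (by omega)] at he
    simp only [Option.mem_some_iff] at he
    have hlast : s[s.length - 1]'(by omega) = γ[j-1]'(by omega) := by
      have := hget (s.length - 1) (by omega)
      rw [this]
      congr 1
      omega
    rw [← he, hlast]
    have h3 := List.isChain_iff_getElem.mp hc (j-1) (by omega)
    have h4 : (⟨j-1+1, by omega⟩ : Fin γ.length) = ⟨j, hj⟩ := by
      simp only [Fin.mk.injEq]
      omega
    rw [getElem_idx_congr γ (show j-1+1 = j by omega)] at h3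
    exact h3.trans heq.symm

theorem length_le_of_no_loop {γ : List Γ.E} (hc : Γ.IsChain γ)
    (h : ∀ (k : ℕ) (hk : k < γ.length), ¬ Γ.HasLoopAt (Γ.src (γ[k]'hk))) :
    γ.length ≤ Fintype.card Γ.V := by
  by_contra hlen
  push_neg at hlen
  obtain ⟨a, b, hne, heq⟩ := Fintype.exists_ne_map_eq_of_card_lt
    (fun k : Fin γ.length => Γ.src (γ[(k:ℕ)]'k.isLt)) (by simpa using hlen)
  rcases lt_or_gt_of_ne hne with hab | hab
  · exact h a a.isLt (Γ.hasLoopAt_of_dup hc hab b.isLt heq)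
  · exact h b b.isLt (Γ.hasLoopAt_of_dup hc hab a.isLt heq.symm)


end GraphStruct


theorem statement5 {G : Type*} [Group G] [Countable G]
    (Γ : GraphStruct G) (lam : ℝ)
    (hsurj : Γ.ev '' Γ.Omega0 = Set.univ)
    (hss : Γ.AlmostSemisimple lam)
    (huniq : ∃ v : Γ.V, Γ.HasLoopAt v ∧ ∀ w : Γ.V, Γ.HasLoopAt w → Γ.MutAcc v w) :
    Γ.Thick lam := by
  classical
  intro v hv
  obtain ⟨v₁, hl₁, hall⟩ := huniq
  -- the maximal vertex has a loop
  have hloopv : Γ.HasLoopAt v := by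
    by_contra hno
    have hempty : ∀ n : ℕ, 1 ≤ n → Γ.compPaths v n = ∅ := by
      intro n hn
      ext es
      simp only [Set.mem_empty_iff_false, iff_false]
      rintro ⟨hlen, hpath, hmem⟩
      cases es with
      | nil => simp at hlen; omega
      | cons e es' =>
        have hsrc : Γ.src e = v := hpath.2 e rfl
        have hmut := (hmem e List.mem_cons_self).2
        obtain ⟨p, hp, hpe, hp0⟩ := Γ.accessible_elim hmut.2
        refine hno ⟨[e] ++ p, by simp, ?_, ?_⟩
        · refine Γ.isPathFrom_append ⟨?_, ?_⟩ ?_ hp (by simp)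
          · exact List.isChain_singleton e
          · intro x hx
            simp only [List.head?_cons, Option.mem_some_iff] at hx
            subst hx
            exact hsrc
          · intro x hx
            simp only [List.getLast?_singleton, Option.mem_some_iff] at hx
            subst hx
            rfl
        · refine Γ.endsAt_append hpe (fun h => ?_)
          intro x hx
          simp only [List.getLast?_singleton, Option.mem_some_iff] at hx
          subst hx
          exact hp0 h
    have h0 : (fun n : ℕ => ((Γ.compPaths v n).ncard : ℝ) ^ ((n : ℝ)⁻¹))
        =ᶠ[Filter.atTop] (fun _ => (0 : ℝ)) := by
      filter_upwards [Filter.eventually_ge_atTop 1] with n hn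
      rw [hempty n hn]
      simp only [Set.ncard_empty, Nat.cast_zero]
      refine Real.zero_rpow ?_
      simp only [ne_eq, inv_eq_zero, Nat.cast_eq_zero]
      omega
    have hv' : Filter.limsup
        (fun n : ℕ => ((Γ.compPaths v n).ncard : ℝ) ^ ((n : ℝ)⁻¹)) Filter.atTop = lam := hv
    rw [Filter.limsup_congr h0, Filter.limsup_const] at hv'
    linarith [hss.1]
  have hC : ∀ w, Γ.HasLoopAt w → Γ.MutAcc v w := fun w hw =>
    Γ.mutAcc_trans (Γ.mutAcc_symm (hall v hloopv)) (hall w hw)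
  obtain ⟨l₀, hl₀ne, hl₀p, hl₀e⟩ := hloopv
  have hqex : ∀ w : Γ.V, ∃ p : List Γ.E,
      Γ.MutAcc v w → p ≠ [] ∧ Γ.IsPathFrom v p ∧ Γ.EndsAt p w := by
    intro w
    by_cases hw : Γ.MutAcc v w
    · obtain ⟨p, hp, hpe, hp0⟩ := Γ.accessible_elim hw.1
      refine ⟨l₀ ++ p, fun _ => ⟨fun h => hl₀ne (List.append_eq_nil_iff.mp h).1, ?_, ?_⟩⟩
      · exact Γ.isPathFrom_append hl₀p hl₀e hp (fun h => absurd h hl₀ne)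
      · refine Γ.endsAt_append hpe (fun h => ?_)
        rw [← hp0 h]
        exact hl₀e
    · exact ⟨[], fun h => absurd h hw⟩
  choose q hq using hqex
  have hrex : ∀ w : Γ.V, ∃ p : List Γ.E,
      Γ.MutAcc v w → Γ.IsPathFrom w p ∧ Γ.EndsAt p v ∧ (p = [] → w = v) := by
    intro w
    by_cases hw : Γ.MutAcc v w
    · obtain ⟨p, h1, h2, h3⟩ := Γ.accessible_elim hw.2
      exact ⟨p, fun _ => ⟨h1, h2, h3⟩⟩
    · exact ⟨[], fun h => absurd h hw⟩
  choose r hr using hrex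
  set NV := Fintype.card Γ.V with hNV
  have hUfin : {l : List Γ.E | l.length ≤ NV + 1}.Finite := List.finite_length_le _ _
  set B : Finset G := ((hUfin.toFinset ×ˢ (Finset.univ : Finset Γ.V)).image
      (fun x => Γ.ev x.1 * (Γ.ev (q x.2))⁻¹)) ∪
    ((hUfin.toFinset ×ˢ (Finset.univ : Finset Γ.V)).image
      (fun x => (Γ.ev (r x.2))⁻¹ * Γ.ev x.1)) ∪ {1} with hB
  have hB1 : ∀ u : List Γ.E, u.length ≤ NV + 1 → ∀ w : Γ.V,
      Γ.ev u * (Γ.ev (q w))⁻¹ ∈ B := by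
    intro u hu w
    rw [hB]
    refine Finset.mem_union_left _ (Finset.mem_union_left _ (Finset.mem_image.mpr ?_))
    refine ⟨(u, w), ?_, rfl⟩
    rw [Finset.mem_product]
    exact ⟨hUfin.mem_toFinset.mpr hu, Finset.mem_univ w⟩
  have hB2 : ∀ u : List Γ.E, u.length ≤ NV + 1 → ∀ w : Γ.V,
      (Γ.ev (r w))⁻¹ * Γ.ev u ∈ B := by
    intro u hu w
    rw [hB]
    refine Finset.mem_union_left _ (Finset.mem_union_right _ (Finset.mem_image.mpr ?_))
    refine ⟨(u, w), ?_, rfl⟩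
    rw [Finset.mem_product]
    exact ⟨hUfin.mem_toFinset.mpr hu, Finset.mem_univ w⟩
  have hB3 : (1 : G) ∈ B := by
    rw [hB]
    exact Finset.mem_union_right _ (Finset.mem_singleton_self 1)
  refine ⟨B, ?_⟩
  intro g
  have hg : g ∈ Γ.ev '' Γ.Omega0 := by rw [hsurj]; exact Set.mem_univ g
  obtain ⟨γ, hγ, rfl⟩ := hg
  have hγc : Γ.IsChain γ := hγ.1
  have hshort : ∀ δ : List Γ.E, Γ.IsChain δ →
      (∀ (k : ℕ) (hk : k < δ.length), ¬ Γ.MutAcc v (Γ.src (δ[k]'hk))) →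
      δ.length ≤ NV :=
    fun δ hδ hk => Γ.length_le_of_no_loop hδ (fun k hkk hloop => hk k hkk (hC _ hloop))
  by_cases hex : ∃ k : ℕ, ∃ hk : k < γ.length, Γ.MutAcc v (Γ.src (γ[k]'hk))
  · obtain ⟨k₀, hk₀, hk₀C⟩ := hex
    set S : Finset ℕ := (Finset.range γ.length).filter
      (fun k => ∃ hk : k < γ.length, Γ.MutAcc v (Γ.src (γ[k]'hk))) with hS
    have hSne : S.Nonempty := by
      refine ⟨k₀, ?_⟩
      rw [hS]
      simp only [Finset.mem_filter, Finset.mem_range]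
      exact ⟨hk₀, hk₀, hk₀C⟩
    set i := S.min' hSne with hi
    set j := S.max' hSne with hjdef
    have hiS : i ∈ S := S.min'_mem hSne
    have hjS : j ∈ S := S.max'_mem hSne
    have hij : i ≤ j := S.min'_le j hjS
    obtain ⟨hiL, hiC⟩ := (Finset.mem_filter.mp hiS).2
    obtain ⟨hjL, hjC⟩ := (Finset.mem_filter.mp hjS).2
    have hminS : ∀ (k : ℕ) (hk : k < γ.length), Γ.MutAcc v (Γ.src (γ[k]'hk)) →
        i ≤ k ∧ k ≤ j := by
      intro k hk hkC
      have hkS : k ∈ S := by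
        rw [hS]
        simp only [Finset.mem_filter, Finset.mem_range]
        exact ⟨hk, hk, hkC⟩
      exact ⟨S.min'_le k hkS, S.le_max' k hkS⟩
    set w₁ := Γ.src (γ[i]'hiL) with hw₁
    set w₂ := Γ.src (γ[j]'hjL) with hw₂
    have hiC' : Γ.MutAcc v w₁ := by rw [hw₁]; exact hiC
    have hjC' : Γ.MutAcc v w₂ := by rw [hw₂]; exact hjC
    set pre := γ.take i with hpre
    set mid := (γ.drop i).take (j - i) with hmid
    set suf := γ.drop j with hsuf
    have hsplit : γ = pre ++ mid ++ suf := by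
      rw [hpre, hmid, hsuf, List.append_assoc]
      have h1 : (γ.drop i).drop (j - i) = γ.drop j := by
        rw [List.drop_drop]
        congr 1
        omega
      rw [← h1, List.take_append_drop, List.take_append_drop]
    have hprelen : pre.length ≤ NV := by
      refine hshort pre (hγc.infix (List.take_prefix i γ).isInfix) ?_
      intro k hk hkC
      have hkl : k < i := by
        rw [hpre] at hk
        simp only [List.length_take] at hk
        omega
      have he : pre[k]'hk = γ[k]'(by omega) := List.getElem_take (xs := γ)
      rw [he] at hkC
      have := (hminS k (by omega) hkC).1
      omega
    have hsuflen : suf.length ≤ NV + 1 := by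
      have h2 : (γ.drop (j + 1)).length ≤ NV := by
        refine hshort _ (hγc.infix (List.drop_suffix (j + 1) γ).isInfix) ?_
        intro k hk hkC
        have hk' : j + 1 + k < γ.length := by
          simp only [List.length_drop] at hk
          omega
        have he : (γ.drop (j + 1))[k]'hk = γ[j + 1 + k]'hk' := List.getElem_drop (xs := γ)
        rw [he] at hkC
        have := (hminS (j + 1 + k) hk' hkC).2
        omega
      rw [hsuf]
      simp only [List.length_drop] at h2 ⊢
      omega
    have hmidlen : mid.length = j - i := by
      rw [hmid]
      simp only [List.length_take, List.length_drop]
      omega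
    have hmidget : ∀ (k : ℕ) (hk : k < mid.length),
        mid[k] = γ[i + k]'(by rw [hmidlen] at hk; omega) := by
      intro k hk
      exact (List.getElem_take (xs := γ.drop i)).trans (List.getElem_drop (xs := γ))
    have hmidpath : Γ.IsPathFrom w₁ mid := by
      refine ⟨hγc.infix ((List.take_prefix _ _).isInfix.trans
        (List.drop_suffix i γ).isInfix), ?_⟩
      intro e he
      obtain ⟨h0, rfl⟩ := mem_head?_eq he
      rw [hmidget 0 h0, hw₁]
      rfl
    have hmidend : Γ.EndsAt mid w₂ := by
      intro e he
      obtain ⟨h0, rfl⟩ := mem_getLast?_eq he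
      have hlt : i < j := by
        rw [hmidlen] at h0
        omega
      rw [hmidget (mid.length - 1) (by omega)]
      have h3 := List.isChain_iff_getElem.mp hγc (j - 1) (by omega)
      have h4 : (⟨j - 1 + 1, by omega⟩ : Fin γ.length) = ⟨j, hjL⟩ := by
        simp only [Fin.mk.injEq]
        omega
      rw [getElem_idx_congr γ (show j-1+1 = j by omega)] at h3
      have h5 : γ[i + (mid.length - 1)]'(by rw [hmidlen]; omega) = γ[j - 1]'(by omega) :=
        getElem_idx_congr γ (by rw [hmidlen]; omega) _
      rw [h5]
      rw [hw₂]
      exact h3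
    have hmidnil : mid = [] → w₁ = w₂ := by
      intro h
      have hji : i = j := by
        rw [h] at hmidlen
        simp only [List.length_nil] at hmidlen
        omega
      rw [hw₁, hw₂]
      exact congrArg Γ.src (getElem_idx_congr γ hji hiL)
    have hqw₁ := hq w₁ hiC'
    have hrw₂ := hr w₂ hjC'
    set L := q w₁ ++ (mid ++ r w₂) with hL
    have hLne : L ≠ [] := by
      rw [hL]
      intro h
      exact hqw₁.1 (List.append_eq_nil_iff.mp h).1
    have hmr : Γ.IsPathFrom w₁ (mid ++ r w₂) :=
      Γ.isPathFrom_append hmidpath hmidend hrw₂.1 hmidnil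
    have hmre : Γ.EndsAt (mid ++ r w₂) v := by
      refine Γ.endsAt_append hrw₂.2.1 (fun h => ?_)
      rw [← hrw₂.2.2 h]
      exact hmidend
    have hLpath : Γ.IsPathFrom v L :=
      Γ.isPathFrom_append hqw₁.2.1 hqw₁.2.2 hmr (fun h => absurd h hqw₁.1)
    have hLend : Γ.EndsAt L v := by
      refine Γ.endsAt_append hmre (fun h => ?_)
      rw [List.append_eq_nil_iff] at h
      have hw1v : w₁ = v := (hmidnil h.1).trans (hrw₂.2.2 h.2)
      rw [← hw1v]
      exact hqw₁.2.2
    refine ⟨Γ.ev pre * (Γ.ev (q w₁))⁻¹, hB1 pre (by omega) w₁,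
      Γ.ev L, ⟨L, hLne, hLpath, hLend, rfl⟩,
      (Γ.ev (r w₂))⁻¹ * Γ.ev suf, hB2 suf hsuflen w₂, ?_⟩
    conv_lhs => rw [hsplit]
    rw [hL]
    simp only [GraphStruct.ev_append]
    group
  · push_neg at hex
    have hlen : γ.length ≤ NV := hshort γ hγc hex
    obtain ⟨h1, h2, h3⟩ := hq v (Γ.mutAcc_refl v)
    exact ⟨Γ.ev γ * (Γ.ev (q v))⁻¹, hB1 γ (by omega) v,
      Γ.ev (q v), ⟨q v, h1, h2, h3, rfl⟩, 1, hB3, by group⟩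
end

section
/- Let p : [0,∞) → [0,1] be a decreasing function with p(x) → 0 as x → ∞. For each α > 0 and each C > 0 there exists a function p̃ : [0,∞) → [0,∞) such that: (1) p̃(x) ≥ p(x) for all x ≥ 0; (2) p̃(x + mC) ≥ p̃(x)·e^{−αm} for all x ≥ 0 and all natural numbers m; and (3) p̃(x) → 0 as x → ∞. -/
open Filter Set

theorem statement10 (p : ℝ → ℝ)
    (hp01 : ∀ x : ℝ, 0 ≤ x → p x ∈ Set.Icc (0:ℝ) 1)
    (hanti : ∀ x y : ℝ, 0 ≤ x → x ≤ y → p y ≤ p x)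
    (hlim : Filter.Tendsto p Filter.atTop (nhds 0))
    (α C : ℝ) (hα : 0 < α) (hC : 0 < C) :
    ∃ ptilde : ℝ → ℝ,
      (∀ x : ℝ, 0 ≤ x → 0 ≤ ptilde x) ∧
      (∀ x : ℝ, 0 ≤ x → p x ≤ ptilde x) ∧
      (∀ x : ℝ, 0 ≤ x → ∀ m : ℕ, ptilde x * Real.exp (-α * m) ≤ ptilde (x + m * C)) ∧
      Filter.Tendsto ptilde Filter.atTop (nhds 0) := by
  classical
  set f : ℝ → ℕ → ℝ := fun x m => p (max (x - m * C) 0) * Real.exp (-α * m) with hf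
  have hf0 : ∀ x m, 0 ≤ f x m := by
    intro x m
    exact mul_nonneg (hp01 _ (le_max_right _ _)).1 (Real.exp_pos _).le
  have hf1 : ∀ x m, f x m ≤ Real.exp (-α * m) := by
    intro x m
    exact mul_le_of_le_one_left (Real.exp_pos _).le (hp01 _ (le_max_right _ _)).2
  have hfle1 : ∀ x m, f x m ≤ 1 := by
    intro x m
    refine (hf1 x m).trans (Real.exp_le_one_iff.2 ?_)
    simp only [neg_mul, neg_nonpos]
    positivity
  have hbdd : ∀ x, BddAbove (Set.range (f x)) := by
    intro x
    exact ⟨1, by rintro _ ⟨m, rfl⟩; exact hfle1 x m⟩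
  set pt : ℝ → ℝ := fun x => ⨆ m : ℕ, f x m with hpt
  have hptnn : ∀ x, 0 ≤ pt x := by
    intro x
    exact le_trans (hf0 x 0) (le_ciSup (hbdd x) 0)
  refine ⟨pt, fun x _ => hptnn x, ?_, ?_, ?_⟩
  · intro x hx
    have h0 : f x 0 = p x := by
      simp [hf, max_eq_left hx]
    calc p x = f x 0 := h0.symm
      _ ≤ pt x := le_ciSup (hbdd x) 0
  · intro x hx m
    have key : pt x ≤ pt (x + m * C) * Real.exp (α * m) := by
      refine ciSup_le fun k => ?_
      have harg : x + (m:ℝ) * C - ((k + m : ℕ) : ℝ) * C = x - k * C := by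
        push_cast; ring
      have hexp : Real.exp (-α * ((k + m : ℕ) : ℝ)) * Real.exp (α * m)
          = Real.exp (-α * k) := by
        rw [← Real.exp_add]; push_cast; ring_nf
      have : f x k = f (x + m * C) (k + m) * Real.exp (α * m) := by
        simp only [hf, harg, mul_assoc, hexp]
      rw [this]
      exact mul_le_mul_of_nonneg_right (le_ciSup (hbdd _) (k + m)) (Real.exp_pos _).le
    have := mul_le_mul_of_nonneg_right key (Real.exp_pos (-α * m)).le
    rwa [mul_assoc, ← Real.exp_add, (by ring : α * (m:ℝ) + -α * m = 0), Real.exp_zero,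
      mul_one] at this
  · rw [Metric.tendsto_atTop]
    intro ε hε
    -- choose M with exp(-α M) < ε/2
    obtain ⟨M, hM⟩ := exists_nat_gt ((2 / ε - 1) / α)
    have hexpM : Real.exp (-α * M) < ε / 2 := by
      have h1 : α * M + 1 ≤ Real.exp (α * M) := Real.add_one_le_exp _
      have h2 : 2 / ε < α * M + 1 := by
        have := (div_lt_iff₀ hα).1 hM
        linarith
      have h3 : 2 / ε < Real.exp (α * M) := lt_of_lt_of_le h2 h1
      have h5 : 2 < Real.exp (α * M) * ε := (div_lt_iff₀ hε).1 h3
      have h4 : (Real.exp (α * M))⁻¹ < ε / 2 := by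
        rw [inv_eq_one_div, div_lt_iff₀ (Real.exp_pos _)]
        nlinarith
      rwa [neg_mul, Real.exp_neg]
    obtain ⟨y₀, hy₀⟩ : ∃ y₀ : ℝ, ∀ y ≥ y₀, p y < ε / 2 :=
      Filter.eventually_atTop.1 (hlim (Iio_mem_nhds (half_pos hε)))
    refine ⟨max y₀ 0 + M * C, fun x hx => ?_⟩
    have hsup : pt x ≤ ε / 2 := by
      refine ciSup_le fun m => ?_
      rcases le_total m M with hm | hm
      · have h1 : max y₀ 0 ≤ x - m * C := by
          have : (m : ℝ) * C ≤ (M : ℝ) * C :=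
            mul_le_mul_of_nonneg_right (by exact_mod_cast hm) hC.le
          linarith
        have hmax : max (x - m * C) 0 = x - m * C :=
          max_eq_left (le_trans (le_max_right _ _) h1)
        have hp : p (x - m * C) < ε / 2 :=
          hy₀ _ (le_trans (le_max_left _ _) h1)
        calc f x m ≤ p (max (x - m * C) 0) * 1 :=
              mul_le_mul_of_nonneg_left (Real.exp_le_one_iff.2 (by
                simp only [neg_mul, neg_nonpos]; positivity))
                (hp01 _ (le_max_right _ _)).1
          _ = p (x - m * C) := by rw [hmax, mul_one]
          _ ≤ ε / 2 := hp.le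
      · calc f x m ≤ Real.exp (-α * m) := hf1 x m
          _ ≤ Real.exp (-α * M) := by
              apply Real.exp_le_exp.2
              simp only [neg_mul, neg_le_neg_iff]
              exact mul_le_mul_of_nonneg_left (by exact_mod_cast hm) hα.le
          _ ≤ ε / 2 := hexpM.le
    rw [Real.dist_eq, sub_zero, abs_of_nonneg (hptnn x)]
    exact lt_of_le_of_lt hsup (half_lt_self hε)
end

section
/- For every δ ≥ 0 there exist constants c ≥ 0 and C ≥ 0, depending only on δ, such that for every geodesic δ-hyperbolic metric space X, every isometry g of X, and every x ∈ X with d(x, gx) ≥ 2·(gx, g⁻¹x)ₓ + c, the translation length of g satisfies |τ(g) − (d(x, gx) − 2·(gx, g⁻¹x)ₓ)| ≤ C. -/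
open Filter Set

theorem statement14 (δ : ℝ) (hδ : 0 ≤ δ) :
    ∃ c ≥ (0:ℝ), ∃ C ≥ (0:ℝ),
      ∀ (X : Type) [inst : MetricSpace X], IsGeodesicSpace X → IsDeltaHyperbolic X δ →
        ∀ (g : X ≃ᵢ X) (x : X),
          2 * gromovProd x (g x) (g.symm x) + c ≤ dist x (g x) →
          |Filter.limsup (fun n : ℕ => dist ((⇑g)^[n] x) x / n) Filter.atTop -
              (dist x (g x) - 2 * gromovProd x (g x) (g.symm x))| ≤ C := by
  refine ⟨2 * δ + 1, by linarith, 2 * δ, by linarith, ?_⟩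
  intro X _ _hgeo hhyp g x hc
  set L := dist x (g x) with hL
  set P := gromovProd x (g x) (g.symm x) with hP
  set a : ℕ → ℝ := fun n => dist ((⇑g)^[n] x) x with ha
  have ha0 : a 0 = 0 := by simp [ha]
  have ha1 : a 1 = L := by simp [ha, hL, dist_comm]
  have haxn : ∀ n, dist x ((⇑g)^[n] x) = a n := fun n => dist_comm _ _
  have hLsymm : dist x (g.symm x) = L := by
    rw [hL, ← g.dist_eq x (g.symm x), g.apply_symm_apply]
    exact dist_comm _ _
  have hE : ∀ n, dist (g.symm x) ((⇑g)^[n] x) = a (n + 1) := by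
    intro n
    rw [← g.dist_eq (g.symm x) ((⇑g)^[n] x), g.apply_symm_apply,
      ← Function.iterate_succ_apply' (⇑g) n x, haxn]
  have hD : ∀ n, dist (g x) ((⇑g)^[n + 1] x) = a n := by
    intro n
    rw [Function.iterate_succ_apply' (⇑g) n x, g.dist_eq, haxn]
  have hP0 : 0 ≤ P := by
    rw [hP]; unfold gromovProd
    have h := dist_triangle (g x) x (g.symm x)
    have h1 := dist_comm (g x) x
    have h2 := dist_comm (g.symm x) x
    linarith
  have hann : ∀ n, 0 ≤ a n := fun n => dist_nonneg
  have key : ∀ n : ℕ, (L - 2 * P - 2 * δ ≤ a (n + 1) - a n) ∧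
      (1 ≤ n → a (n + 1) - a n ≤ L - 2 * P + 2 * δ) := by
    intro n
    induction n with
    | zero =>
      refine ⟨by rw [ha1, ha0]; linarith, by omega⟩
    | succ n ih =>
      have ih1 := ih.1
      have hQ : gromovProd x (g x) ((⇑g)^[n + 1] x) = (L + a (n + 1) - a n) / 2 := by
        unfold gromovProd; rw [hD, haxn, ← hL]
      have hcn : gromovProd x (g.symm x) ((⇑g)^[n + 1] x) = (L + a (n + 1) - a (n + 2)) / 2 := by
        unfold gromovProd; rw [hE, haxn, hLsymm]
      have hPsymm : gromovProd x (g.symm x) (g x) = P := by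
        rw [hP]; unfold gromovProd; rw [dist_comm (g.symm x) (g x), dist_comm x (g.symm x),
          dist_comm x (g x)]; ring
      have hQsymm : gromovProd x ((⇑g)^[n + 1] x) (g x) = (L + a (n + 1) - a n) / 2 := by
        unfold gromovProd; rw [dist_comm ((⇑g)^[n+1] x) (g x), hD, haxn, ← hL]; ring
      have H1 := hhyp x (g.symm x) ((⇑g)^[n + 1] x) (g x)
      have H2 := hhyp x (g.symm x) (g x) ((⇑g)^[n + 1] x)
      rw [hPsymm, hQ, hcn] at H1
      rw [hPsymm, hcn, hQsymm] at H2
      have hQbig : P + δ < (L + a (n + 1) - a n) / 2 := by linarith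
      have hmin1 : min P ((L + a (n + 1) - a n) / 2) = P := min_eq_left (by linarith)
      rw [hmin1] at H1
      have hcub : (L + a (n + 1) - a (n + 2)) / 2 ≤ P + δ := by
        rcases le_total ((L + a (n + 1) - a (n + 2)) / 2) ((L + a (n + 1) - a n) / 2)
          with hle | hle
        · rw [min_eq_left hle] at H2; linarith
        · rw [min_eq_right hle] at H2; linarith
      exact ⟨by linarith, fun _ => by linarith⟩
  have low : ∀ n : ℕ, (n : ℝ) * (L - 2 * P - 2 * δ) ≤ a n := by
    intro n
    induction n with
    | zero => simp [ha0]
    | succ n ih =>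
      have := (key n).1
      push_cast
      linarith
  have high : ∀ n : ℕ, a n ≤ (n : ℝ) * (L - 2 * P + 2 * δ) + 2 * P := by
    intro n
    induction n with
    | zero => rw [ha0]; push_cast; linarith
    | succ n ih =>
      rcases Nat.eq_zero_or_pos n with h0 | hpos
      · subst h0; rw [ha1]; push_cast; linarith
      · have := (key n).2 hpos
        push_cast
        linarith
  set f : ℕ → ℝ := fun n : ℕ => dist ((⇑g)^[n] x) x / n with hf
  have hfa : ∀ n, f n = a n / n := fun n => rfl
  have hLnn : 0 ≤ L := dist_nonneg
  have hfub : ∀ n, f n ≤ L + 2 * δ := by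
    intro n
    rcases Nat.eq_zero_or_pos n with h0 | hpos
    · subst h0; rw [hfa]; simp; linarith
    · rw [hfa]
      have hn : (0 : ℝ) < n := by exact_mod_cast hpos
      rw [div_le_iff₀ hn]
      have h1 := high n
      have h1n : (1 : ℝ) ≤ n := by exact_mod_cast hpos
      nlinarith [hP0, hδ]
  have hflb : ∀ n, 0 ≤ f n := by
    intro n
    rw [hfa]
    exact div_nonneg (hann n) (Nat.cast_nonneg n)
  have hbddabove : Filter.IsBoundedUnder (· ≤ ·) Filter.atTop f :=
    Filter.isBoundedUnder_of ⟨L + 2 * δ, hfub⟩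
  have hcobdd : Filter.IsCoboundedUnder (· ≤ ·) Filter.atTop f :=
    Filter.IsBoundedUnder.isCoboundedUnder_le (Filter.isBoundedUnder_of ⟨0, hflb⟩)
  set gfun : ℕ → ℝ := fun n : ℕ => (L - 2 * P + 2 * δ) + 2 * P / n with hg
  have hgt : Filter.Tendsto gfun Filter.atTop (nhds (L - 2 * P + 2 * δ)) := by
    have h := tendsto_const_div_atTop_nhds_zero_nat (2 * P)
    have := Filter.Tendsto.add (tendsto_const_nhds
      (x := L - 2 * P + 2 * δ) (f := Filter.atTop (α := ℕ))) h
    simpa using this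
  have hfg : ∀ᶠ n in Filter.atTop, f n ≤ gfun n := by
    filter_upwards [Filter.eventually_ge_atTop 1] with n hn
    have hn' : (0 : ℝ) < n := by exact_mod_cast hn
    rw [hfa, hg]
    rw [div_le_iff₀ hn']
    have hmul : ((L - 2 * P + 2 * δ) + 2 * P / n) * n
        = (n : ℝ) * (L - 2 * P + 2 * δ) + 2 * P := by
      field_simp
    rw [hmul]
    exact high n
  have hup : Filter.limsup f Filter.atTop ≤ L - 2 * P + 2 * δ := by
    have h := Filter.limsup_le_limsup hfg hcobdd (hgt.isBoundedUnder_le)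
    rwa [hgt.limsup_eq] at h
  have hdown : L - 2 * P - 2 * δ ≤ Filter.limsup f Filter.atTop := by
    refine Filter.le_limsup_of_frequently_le ?_ hbddabove
    refine Filter.Eventually.frequently ?_
    filter_upwards [Filter.eventually_ge_atTop 1] with n hn
    have hn' : (0 : ℝ) < n := by exact_mod_cast hn
    rw [hfa, le_div_iff₀ hn']
    have := low n
    linarith [mul_comm (n : ℝ) (L - 2 * P - 2 * δ)]
  rw [abs_le]
  constructor <;> [linarith; linarith]
end
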